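/- Let M be a nonempty finite set of items, let n agents have entitlements b_1, …, b_n with b_i > 0 and Σ_i b_i = 1, and let each valuation v_i be monotone (S ⊆ T implies v_i(S) ≤ v_i(T)) with v_i(∅) = 0. Suppose the allocation (A_1, …, A_n), a partition of M, is a competitive equilibrium: there exist nonnegative item prices p : M → ℝ such that for every agent i, p(A_i) ≤ b_i, and every set S ⊆ M with p(S) ≤ b_i satisfies v_i(S) ≤ v_i(A_i). Then every agent receives at least her anyprice share: v_i(A_i) ≥ APS(v_i, b_i) for every i, where APS(v, b) is the infimum over nonnegative price vectors q : M → ℝ with Σ_{e ∈ M} q(e) = 1 of the maximum of v(S) over all S ⊆ M with q(S) ≤ b. -/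

import Mathlib

/-- Every competitive-equilibrium allocation gives each agent at
least her anyprice share, where `APS(v, b)` is the infimum over nonnegative
price vectors `q` summing to 1 of the maximum value of a bundle of price at
most `b`. -/
theorem stmt_4 (n m : ℕ) (hm : 0 < m) (b : Fin n → ℝ)
    (hb : ∀ i, 0 < b i) (hbsum : ∑ i, b i = 1)
    (v : Fin n → Finset (Fin m) → ℝ)
    (hmono : ∀ i, ∀ S T : Finset (Fin m), S ⊆ T → v i S ≤ v i T)
    (hempty : ∀ i, v i ∅ = 0)
    (A : Fin n → Finset (Fin m))
    (hdisj : ∀ i j, i ≠ j → Disjoint (A i) (A j))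
    (hcover : ∀ e, ∃ i, e ∈ A i)
    (p : Fin m → ℝ) (hp : ∀ e, 0 ≤ p e)
    (hafford : ∀ i, ∑ e ∈ A i, p e ≤ b i)
    (hbest : ∀ i, ∀ S : Finset (Fin m), ∑ e ∈ S, p e ≤ b i → v i S ≤ v i (A i)) :
    ∀ i, sInf {t : ℝ | ∃ q : Fin m → ℝ, (∀ e, 0 ≤ q e) ∧ (∑ e, q e = 1) ∧
        t = sSup {u : ℝ | ∃ S : Finset (Fin m), (∑ e ∈ S, q e) ≤ b i ∧ u = v i S}}
      ≤ v i (A i) := by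
  intro i
  -- total price of all items
  have huniv : (Finset.univ : Finset (Fin m)) = Finset.univ.biUnion A := by
    ext e
    simp only [Finset.mem_univ, Finset.mem_biUnion, true_iff, true_and]
    exact hcover e
  have hsump : ∑ e, p e ≤ 1 := by
    have : ∑ e, p e = ∑ j, ∑ e ∈ A j, p e := by
      rw [huniv, Finset.sum_biUnion]
      intro x _ y _ hxy
      exact hdisj x y hxy
    rw [this, ← hbsum]
    exact Finset.sum_le_sum fun j _ => hafford j
  -- the witness price vector
  set c : ℝ := (1 - ∑ e, p e) / m with hc
  have hcnn : 0 ≤ c := by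
    apply div_nonneg (by linarith) (by positivity)
  set q : Fin m → ℝ := fun e => p e + c with hq
  have hqnn : ∀ e, 0 ≤ q e := fun e => add_nonneg (hp e) hcnn
  have hqsum : ∑ e, q e = 1 := by
    simp only [hq, Finset.sum_add_distrib, Finset.sum_const, Finset.card_univ,
      Fintype.card_fin, nsmul_eq_mul, hc]
    field_simp
    ring
  -- for each agent i, the candidate value t
  set U : Set ℝ := {u : ℝ | ∃ S : Finset (Fin m), (∑ e ∈ S, q e) ≤ b i ∧ u = v i S}
    with hU
  have hUfin : U.Finite := by
    apply (Set.finite_range (v i)).subset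
    rintro u ⟨S, _, rfl⟩
    exact ⟨S, rfl⟩
  have hUne : U.Nonempty := by
    refine ⟨v i ∅, ∅, ?_, rfl⟩
    simp [le_of_lt (hb i)]
  have htle : sSup U ≤ v i (A i) := by
    apply csSup_le hUne
    rintro u ⟨S, hS, rfl⟩
    apply hbest i S
    calc ∑ e ∈ S, p e ≤ ∑ e ∈ S, q e :=
          Finset.sum_le_sum fun e _ => le_add_of_nonneg_right hcnn
      _ ≤ b i := hS
  -- the APS set is bounded below by 0
  have hbdd : BddBelow {t : ℝ | ∃ q' : Fin m → ℝ, (∀ e, 0 ≤ q' e) ∧ (∑ e, q' e = 1) ∧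
      t = sSup {u : ℝ | ∃ S : Finset (Fin m), (∑ e ∈ S, q' e) ≤ b i ∧ u = v i S}} := by
    refine ⟨0, ?_⟩
    rintro t ⟨q', hq'nn, hq'sum, rfl⟩
    have h0mem : (0 : ℝ) ∈ {u : ℝ | ∃ S : Finset (Fin m),
        (∑ e ∈ S, q' e) ≤ b i ∧ u = v i S} := by
      refine ⟨∅, ?_, (hempty i).symm⟩
      simp [le_of_lt (hb i)]
    have hfin : {u : ℝ | ∃ S : Finset (Fin m),
        (∑ e ∈ S, q' e) ≤ b i ∧ u = v i S}.Finite := by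
      apply (Set.finite_range (v i)).subset
      rintro u ⟨S, _, rfl⟩
      exact ⟨S, rfl⟩
    exact le_csSup hfin.bddAbove h0mem
  calc sInf {t : ℝ | ∃ q' : Fin m → ℝ, (∀ e, 0 ≤ q' e) ∧ (∑ e, q' e = 1) ∧
        t = sSup {u : ℝ | ∃ S : Finset (Fin m), (∑ e ∈ S, q' e) ≤ b i ∧ u = v i S}}
      ≤ sSup U := csInf_le hbdd ⟨q, hqnn, hqsum, rfl⟩
    _ ≤ v i (A i) := htle
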